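/- Let (Ω,Σ,Pr) be a probability space and A_i ∈ Σ for i ∈ ℕ with S_l := Σ_{1≤i₁<…<i_l} Pr(A_{i₁}∩…∩A_{i_l}). Then the countable inclusion-exclusion identity Pr(⋃_{i∈ℕ} A_i) = Σ_{k=1}^∞ (-1)^{k-1} S_k (convergent series) holds if and only if all S_l are finite and S_l → 0 as l → ∞. -/

import Mathlib

open MeasureTheory Filter ENNReal

noncomputable def S {Ω : Type*} [MeasurableSpace Ω] (μ : Measure Ω) (A : ℕ → Set Ω) (k : ℕ) :
    ℝ≥0∞ :=
  ∑' s : {s : Finset ℕ // s.card = k}, μ (⋂ i ∈ (s : Finset ℕ), A i)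

theorem alt_sum_choose (n N : ℕ) (hn : 1 ≤ n) :
    ∑ k ∈ Finset.Icc 1 n, (-1 : ℝ) ^ (k - 1) * (N.choose k : ℝ) =
      (if 1 ≤ N then (1:ℝ) else 0) - (-1:ℝ)^n * ((N-1).choose n : ℝ) := by
  induction n with
  | zero => omega
  | succ n ih =>
    rcases Nat.eq_zero_or_pos n with rfl | hn'
    · simp
      rcases Nat.eq_zero_or_pos N with rfl | hN
      · simp
      · rcases N with _ | m
        · omega
        · rw [if_pos (by omega : 1 ≤ m+1)]
          simp [Nat.choose_one_right]; ring
    · rw [Finset.sum_Icc_succ_top (by omega), ih hn']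
      rcases Nat.eq_zero_or_pos N with rfl | hN
      · simp [Nat.choose_eq_zero_of_lt (show 0 < n+1 by omega), Nat.choose_eq_zero_of_lt (show 0 < n by omega)]
      · rcases N with _ | m
        · omega
        · simp only [Nat.add_sub_cancel]
          have : (m+1).choose (n+1) = m.choose n + m.choose (n+1) := Nat.choose_succ_succ m n
          rw [this]
          push_cast
          ring

section aux
variable {Ω : Type*} [MeasurableSpace Ω] (μ : Measure Ω) (A : ℕ → Set Ω)

noncomputable def fS (A : ℕ → Set Ω) (k : ℕ) (ω : Ω) : ℝ≥0∞ :=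
  ∑' s : {s : Finset ℕ // s.card = k}, (⋂ i ∈ (s : Finset ℕ), A i).indicator 1 ω

theorem measurable_fS (hA : ∀ i, MeasurableSet (A i)) (k : ℕ) : Measurable (fS A k) := by
  apply Measurable.ennreal_tsum
  intro s
  exact measurable_one.indicator (MeasurableSet.biInter (Set.to_countable _) fun i _ => hA i)

theorem S_eq_lintegral (hA : ∀ i, MeasurableSet (A i)) (k : ℕ) :
    S μ A k = ∫⁻ ω, fS A k ω ∂μ := by
  unfold fS
  rw [lintegral_tsum (μ := μ)
    (f := fun (s : {s : Finset ℕ // s.card = k}) ω => (⋂ i ∈ (s : Finset ℕ), A i).indicator 1 ω)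
    fun s =>
    (measurable_one.indicator (MeasurableSet.biInter (Set.to_countable _) fun i _ => hA i)).aemeasurable]
  refine tsum_congr fun s => ?_
  exact (lintegral_indicator_one (MeasurableSet.biInter (Set.to_countable _) fun i _ => hA i)).symm

omit [MeasurableSpace Ω] in
theorem fS_eq_choose {ω : Ω} {t : Finset ℕ} (ht : {i | ω ∈ A i} = ↑t) (k : ℕ) :
    fS A k ω = (t.card.choose k : ℝ≥0∞) := by
  classical
  unfold fS
  have key : ∀ s : {s : Finset ℕ // s.card = k},
      (⋂ i ∈ (s : Finset ℕ), A i).indicator (1 : Ω → ℝ≥0∞) ω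
        = if (s : Finset ℕ) ⊆ t then 1 else 0 := by
    intro s
    rw [Set.indicator_apply]
    congr 1
    simp only [Set.mem_iInter, eq_iff_iff]
    constructor
    · intro h i hi
      have : i ∈ {i | ω ∈ A i} := h i hi
      rwa [ht, Finset.mem_coe] at this
    · intro h i hi
      have : i ∈ {j | ω ∈ A j} := by rw [ht]; exact_mod_cast h hi
      exact this
  rw [tsum_congr key]
  rw [tsum_eq_sum (s := (t.powersetCard k).subtype (fun s => s.card = k))
    (by
      intro b hb
      rw [if_neg]
      intro hsub
      exact hb (by simp [Finset.mem_subtype, Finset.mem_powersetCard, hsub, b.2]))]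
  rw [Finset.sum_congr rfl (fun b hb => by
    rw [if_pos]
    simp only [Finset.mem_subtype, Finset.mem_powersetCard] at hb
    exact hb.1)]
  rw [Finset.sum_const, nsmul_eq_mul, mul_one, Finset.card_subtype]
  rw [Finset.filter_true_of_mem (fun s hs => (Finset.mem_powersetCard.1 hs).2)]
  rw [Finset.card_powersetCard]

omit [MeasurableSpace Ω] in
theorem fS_eq_top {ω : Ω} (hinf : {i | ω ∈ A i}.Infinite) : fS A 1 ω = ∞ := by
  classical
  by_contra h
  obtain ⟨n, hn⟩ := ENNReal.exists_nat_gt h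
  obtain ⟨u, hut, hcard⟩ := hinf.exists_subset_card_eq n
  set F : Finset {s : Finset ℕ // s.card = 1} :=
    u.attach.map ⟨fun i => ⟨{i.1}, Finset.card_singleton _⟩,
      fun a b hab => Subtype.ext (Finset.singleton_injective (congrArg Subtype.val hab))⟩ with hF
  have hval : ∀ b ∈ F, (⋂ i ∈ (b : Finset ℕ), A i).indicator (1 : Ω → ℝ≥0∞) ω = 1 := by
    intro b hb
    rw [hF, Finset.mem_map] at hb
    obtain ⟨i, hi, rfl⟩ := hb
    have hiu : (i : ℕ) ∈ u := i.2
    have : ω ∈ A i := hut hiu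
    rw [Set.indicator_of_mem (by show ω ∈ ⋂ j ∈ ({(i : ℕ)} : Finset ℕ), A j; simpa using this)]
    rfl
  have hsum : (n : ℝ≥0∞) = ∑ b ∈ F, (⋂ i ∈ (b : Finset ℕ), A i).indicator (1 : Ω → ℝ≥0∞) ω := by
    rw [Finset.sum_congr rfl hval, Finset.sum_const, nsmul_eq_mul, mul_one, hF,
      Finset.card_map, Finset.card_attach, hcard]
  have hle : (n : ℝ≥0∞) ≤ fS A 1 ω := hsum ▸ ENNReal.sum_le_tsum F
  exact absurd hle (not_le.2 hn)

end aux

/-- The countable inclusion-exclusion identity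
`Pr(⋃ A_i) = Σ_{k≥1} (-1)^(k-1) S_k` (with convergent series) holds
iff all `S_l` are finite and `S_l → 0`. -/
theorem stmt3 {Ω : Type*} [MeasurableSpace Ω] (μ : Measure Ω) [IsProbabilityMeasure μ]
    (A : ℕ → Set Ω) (hA : ∀ i, MeasurableSet (A i)) :
    ((∀ l, 1 ≤ l → S μ A l ≠ ∞) ∧
      Tendsto (fun n => ∑ k ∈ Finset.Icc 1 n, (-1 : ℝ) ^ (k - 1) * (S μ A k).toReal)
        atTop (nhds (μ (⋃ i, A i)).toReal)) ↔
    ((∀ l, 1 ≤ l → S μ A l ≠ ∞) ∧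
      Tendsto (fun l : ℕ => (S μ A l).toReal) atTop (nhds 0)) := by
  classical
  have hU : MeasurableSet (⋃ i, A i) := MeasurableSet.iUnion hA
  set T : ℕ → ℝ := fun n => ∑ k ∈ Finset.Icc 1 n, (-1 : ℝ) ^ (k - 1) * (S μ A k).toReal with hT
  set P : ℝ := (μ (⋃ i, A i)).toReal with hP
  constructor
  · rintro ⟨hfin, hconv⟩
    refine ⟨hfin, ?_⟩
    have hdiff : Tendsto (fun n => T (n + 1) - T n) atTop (nhds 0) := by
      have h1 : Tendsto (fun n => T (n + 1)) atTop (nhds P) :=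
        hconv.comp (tendsto_add_atTop_nat 1)
      simpa using h1.sub hconv
    have heq : ∀ n : ℕ, T (n + 1) - T n = (-1 : ℝ) ^ n * (S μ A (n + 1)).toReal := by
      intro n
      simp only [hT]
      rw [Finset.sum_Icc_succ_top (by omega : 1 ≤ n + 1)]
      simp
    have h2 : Tendsto (fun n : ℕ => (S μ A (n + 1)).toReal) atTop (nhds 0) := by
      have habs : Tendsto (fun n => |T (n + 1) - T n|) atTop (nhds 0) := by
        simpa using hdiff.abs
      refine habs.congr fun n => ?_
      rw [heq n, abs_mul, abs_pow, abs_neg, abs_one, one_pow, one_mul,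
        abs_of_nonneg ENNReal.toReal_nonneg]
    exact (tendsto_add_atTop_iff_nat 1).1 h2
  · rintro ⟨hfin, hS0⟩
    refine ⟨hfin, ?_⟩
    set Nf : Ω → ℕ := fun ω => {i | ω ∈ A i}.ncard with hNf
    -- a.e. finiteness
    have hae : ∀ᵐ ω ∂μ, ∃ t : Finset ℕ, {i | ω ∈ A i} = ↑t := by
      have h1 : ∀ᵐ ω ∂μ, fS A 1 ω < ∞ :=
        ae_lt_top (measurable_fS A hA 1)
          (by rw [← S_eq_lintegral μ A hA 1]; exact hfin 1 le_rfl)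
      refine h1.mono fun ω h => ?_
      rcases Set.finite_or_infinite {i | ω ∈ A i} with hf | hinf
      · obtain ⟨t, ht⟩ := hf.exists_finset_coe
        exact ⟨t, ht.symm⟩
      · exact absurd (fS_eq_top A hinf) h.ne
    have hgk : ∀ᵐ ω ∂μ, ∀ k, (fS A k ω).toReal = ((Nf ω).choose k : ℝ) := by
      refine hae.mono fun ω h k => ?_
      obtain ⟨t, ht⟩ := h
      rw [fS_eq_choose A ht k]
      simp [hNf, ht, Set.ncard_coe_finset]
    have hind : ∀ᵐ ω ∂μ,
        (⋃ i, A i).indicator (fun _ => (1:ℝ)) ω = if 1 ≤ Nf ω then (1:ℝ) else 0 := by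
      refine hae.mono fun ω h => ?_
      obtain ⟨t, ht⟩ := h
      by_cases hω : ω ∈ ⋃ i, A i
      · obtain ⟨i, hi⟩ := Set.mem_iUnion.1 hω
        have hit : i ∈ t := by rw [← Finset.mem_coe, ← ht]; exact hi
        have hcard : 1 ≤ Nf ω := by
          rw [hNf]; simp only [ht, Set.ncard_coe_finset]
          exact Finset.card_pos.2 ⟨i, hit⟩
        rw [Set.indicator_of_mem hω, if_pos hcard]
      · have hempty : {i | ω ∈ A i} = ∅ := by
          ext i; simp only [Set.mem_setOf_eq, Set.mem_empty_iff_false, iff_false]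
          exact fun hi => hω (Set.mem_iUnion.2 ⟨i, hi⟩)
        have : Nf ω = 0 := by rw [hNf]; simp [hempty]
        rw [Set.indicator_of_notMem hω, if_neg (by omega)]
    -- integrability
    have Ig : ∀ k, 1 ≤ k → Integrable (fun ω => (fS A k ω).toReal) μ := fun k hk =>
      integrable_toReal_of_lintegral_ne_top (measurable_fS A hA k).aemeasurable
        (by rw [← S_eq_lintegral μ A hA k]; exact hfin k hk)
    have hSk : ∀ k, 1 ≤ k → (∫ ω, (fS A k ω).toReal ∂μ) = (S μ A k).toReal := fun k hk => by
      rw [integral_toReal (measurable_fS A hA k).aemeasurable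
        (ae_lt_top (measurable_fS A hA k)
          (by rw [← S_eq_lintegral μ A hA k]; exact hfin k hk)),
        ← S_eq_lintegral μ A hA k]
    have hIndInt : Integrable ((⋃ i, A i).indicator (fun _ => (1:ℝ))) μ :=
      (integrable_const (1:ℝ)).indicator hU
    have hIndInt' : (∫ ω, (⋃ i, A i).indicator (fun _ => (1:ℝ)) ω ∂μ) = P := by
      rw [hP]; exact integral_indicator_one hU
    -- main bound
    have key : ∀ n, 1 ≤ n → |T n - P| ≤ (S μ A n).toReal := by
      intro n hn
      set D : Ω → ℝ := fun ω => ((Nf ω - 1).choose n : ℝ) with hD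
      set L : Ω → ℝ := fun ω => ∑ k ∈ Finset.Icc 1 n, (-1:ℝ)^(k-1) * (fS A k ω).toReal with hL
      have hLint : Integrable L μ := by
        apply integrable_finset_sum
        intro k hk
        exact ((Ig k (Finset.mem_Icc.1 hk).1).const_mul _)
      have hpt : ∀ᵐ ω ∂μ, L ω = (⋃ i, A i).indicator (fun _ => (1:ℝ)) ω - (-1:ℝ)^n * D ω := by
        filter_upwards [hgk, hind] with ω h1 h2
        rw [hL, hD, h2]
        calc ∑ k ∈ Finset.Icc 1 n, (-1:ℝ)^(k-1) * (fS A k ω).toReal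
            = ∑ k ∈ Finset.Icc 1 n, (-1:ℝ)^(k-1) * ((Nf ω).choose k : ℝ) := by
              refine Finset.sum_congr rfl fun k _ => by rw [h1 k]
          _ = _ := alt_sum_choose n (Nf ω) hn
      have hDeq : D =ᵐ[μ] fun ω => (-1:ℝ)^n * ((⋃ i, A i).indicator (fun _ => (1:ℝ)) ω - L ω) := by
        filter_upwards [hpt] with ω h
        rcases Nat.even_or_odd n with he | ho
        · rw [he.neg_one_pow] at h ⊢; simp at h ⊢; linarith
        · rw [ho.neg_one_pow] at h ⊢; linarith
      have hDint : Integrable D μ :=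
        (((hIndInt.sub hLint).const_mul _)).congr hDeq.symm
      have hintD : (∫ ω, L ω ∂μ) = P - (-1:ℝ)^n * ∫ ω, D ω ∂μ := by
        rw [integral_congr_ae hpt, integral_sub hIndInt (hDint.const_mul _),
          integral_const_mul, hIndInt']
      have hTL : (∫ ω, L ω ∂μ) = T n := by
        rw [hL, integral_finset_sum _ fun k hk => (Ig k (Finset.mem_Icc.1 hk).1).const_mul _]
        rw [hT]
        refine Finset.sum_congr rfl fun k hk => ?_
        rw [integral_const_mul, hSk k (Finset.mem_Icc.1 hk).1]
      have hDnonneg : 0 ≤ ∫ ω, D ω ∂μ :=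
        integral_nonneg fun ω => by positivity
      have hDle : (∫ ω, D ω ∂μ) ≤ (S μ A n).toReal := by
        rw [← hSk n hn]
        refine integral_mono_ae hDint (Ig n hn) ?_
        filter_upwards [hgk] with ω h
        rw [h n]
        show ((Nf ω - 1).choose n : ℝ) ≤ ((Nf ω).choose n : ℝ)
        exact_mod_cast Nat.choose_le_choose n (Nat.sub_le _ 1)
      rw [← hTL, hintD]
      rw [show P - (-1:ℝ)^n * ∫ ω, D ω ∂μ - P = -((-1:ℝ)^n * ∫ ω, D ω ∂μ) by ring,
        abs_neg, abs_mul, abs_pow, abs_neg, abs_one, one_pow, one_mul,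
        abs_of_nonneg hDnonneg]
      exact hDle
    -- conclude
    have : Tendsto (fun n => |T n - P|) atTop (nhds 0) := by
      refine squeeze_zero' (Eventually.of_forall fun n => abs_nonneg _) ?_ hS0
      filter_upwards [eventually_ge_atTop 1] with n hn
      exact key n hn
    rw [tendsto_iff_norm_sub_tendsto_zero]
    simpa [Real.norm_eq_abs] using this
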